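/- Every finite simple graph G with maximum degree at most 3 admits an orientation with maximum outdegree at most 2 such that every vertex of outdegree exactly 2 has an out-neighbour whose outdegree is at most 1. That is, there is an orientation r of G with: every vertex has outdegree at most 2, and for every vertex u with outdegree 2 there exists a vertex w with r(u,w) such that w has outdegree at most 1. -/

import Mathlib

set_option linter.unusedSectionVars false

section Aux
variable {V : Type} [Fintype V] [DecidableEq V]

private lemma sgo_no_edge (A : V → V → Prop) (h : ∀ u v, ¬ A u v) :
    ∃ r : V → V → Prop,
      (∀ u v, (r u v ∨ r v u) ↔ A u v) ∧
      (∀ u v, ¬ (r u v ∧ r v u)) ∧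
      (∀ v, {u | r v u}.ncard ≤ 1) ∧
      (∀ u v, ¬ r u v) := by
  refine ⟨fun _ _ => False, fun u v => ?_, fun u v => by simp, fun v => by simp, fun u v => by simp⟩
  simp [h u v]

private lemma sgo_step (n : ℕ)
    (IH : ∀ (A : V → V → Prop), {p : V × V | A p.1 p.2}.ncard ≤ n →
      (∀ u v, A u v → A v u) → (∀ v, ¬ A v v) → (∀ v, {u | A v u}.ncard ≤ 2) →
      ∀ s, {u | A s u}.ncard ≤ 1 →
      ∃ r : V → V → Prop,
        (∀ u v, (r u v ∨ r v u) ↔ A u v) ∧ (∀ u v, ¬ (r u v ∧ r v u)) ∧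
        (∀ v, {u | r v u}.ncard ≤ 1) ∧ (∀ u, ¬ r s u))
    (A : V → V → Prop) (hm : {p : V × V | A p.1 p.2}.ncard ≤ n + 1)
    (hsym : ∀ u v, A u v → A v u) (hirr : ∀ v, ¬ A v v)
    (hdeg : ∀ v, {u | A v u}.ncard ≤ 2)
    (p q : V) (hpq : A p q) :
    ∃ r : V → V → Prop,
      (∀ u v, (r u v ∨ r v u) ↔ A u v) ∧ (∀ u v, ¬ (r u v ∧ r v u)) ∧
      (∀ v, {u | r v u}.ncard ≤ 1) ∧
      (∀ s, s ≠ p → (∀ u, A s u → s = q ∧ u = p) → ∀ u, ¬ r s u) := by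
  classical
  set A' : V → V → Prop := fun u v => A u v ∧ ¬(u = p ∧ v = q) ∧ ¬(u = q ∧ v = p) with hA'
  have hsym' : ∀ u v, A' u v → A' v u := by
    rintro u v ⟨h1, h2, h3⟩
    exact ⟨hsym u v h1, fun hc => h3 ⟨hc.2, hc.1⟩, fun hc => h2 ⟨hc.2, hc.1⟩⟩
  have hirr' : ∀ v, ¬ A' v v := fun v h => hirr v h.1
  have hdeg' : ∀ v, {u | A' v u}.ncard ≤ 2 := by
    intro v
    exact le_trans (Set.ncard_le_ncard (fun u h => h.1) (Set.toFinite _)) (hdeg v)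
  have hpq' : p ≠ q := fun h => hirr p (h ▸ hpq)
  have hm' : {p' : V × V | A' p'.1 p'.2}.ncard ≤ n := by
    have hss : {p' : V × V | A' p'.1 p'.2} ⊂ {p' : V × V | A p'.1 p'.2} := by
      constructor
      · intro x hx; exact hx.1
      · intro hsub
        have h1 : ((p, q) : V × V) ∈ {p' : V × V | A p'.1 p'.2} := hpq
        have h2 := hsub h1
        exact h2.2.1 ⟨rfl, rfl⟩
    have := Set.ncard_lt_ncard hss (Set.toFinite _)
    omega
  have hdp : {u | A' p u}.ncard ≤ 1 := by
    have hsub : {u | A' p u} ⊆ {u | A p u} \ {q} := by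
      intro u hu
      exact ⟨hu.1, fun hc => hu.2.1 ⟨rfl, hc⟩⟩
    have hq : q ∈ {u | A p u} := hpq
    have := Set.ncard_le_ncard hsub (Set.toFinite _)
    rw [Set.ncard_diff_singleton_of_mem hq] at this
    have := hdeg p
    omega
  obtain ⟨r', hiff', hnb', hod', hsink'⟩ := IH A' hm' hsym' hirr' hdeg' p hdp
  refine ⟨fun u v => r' u v ∨ (u = p ∧ v = q), ?_, ?_, ?_, ?_⟩
  · intro u v
    constructor
    · rintro ((h | h) | (h | h))
      · exact ((hiff' u v).mp (Or.inl h)).1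
      · rw [h.1, h.2]; exact hpq
      · exact hsym v u ((hiff' v u).mp (Or.inl h)).1
      · rw [h.1, h.2]; exact hsym p q hpq
    · intro hA
      by_cases h1 : u = p ∧ v = q
      · exact Or.inl (Or.inr h1)
      · by_cases h2 : u = q ∧ v = p
        · exact Or.inr (Or.inr ⟨h2.2, h2.1⟩)
        · have hA' : A' u v := ⟨hA, h1, h2⟩
          rcases (hiff' u v).mpr hA' with h | h
          · exact Or.inl (Or.inl h)
          · exact Or.inr (Or.inl h)
  · rintro u v ⟨h1 | h1, h2 | h2⟩
    · exact hnb' u v ⟨h1, h2⟩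
    · have := (hiff' u v).mp (Or.inl h1)
      exact this.2.2 ⟨h2.2, h2.1⟩
    · have := (hiff' v u).mp (Or.inl h2)
      exact this.2.2 ⟨h1.2, h1.1⟩
    · exact hpq' (h1.1.symm.trans h2.2)
  · intro v
    by_cases hv : v = p
    · subst hv
      have hsub : {u | r' v u ∨ (v = v ∧ u = q)} ⊆ {q} := by
        rintro u (h | ⟨_, h⟩)
        · exact absurd h (hsink' u)
        · exact h
      calc {u | r' v u ∨ (v = v ∧ u = q)}.ncard ≤ ({q} : Set V).ncard :=
            Set.ncard_le_ncard hsub (Set.toFinite _)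
        _ ≤ 1 := by simp
    · have hsub : {u | r' v u ∨ (v = p ∧ u = q)} ⊆ {u | r' v u} := by
        rintro u (h | ⟨h, _⟩)
        · exact h
        · exact absurd h hv
      exact le_trans (Set.ncard_le_ncard hsub (Set.toFinite _)) (hod' v)
  · rintro s hsp hcond u (h | ⟨h, _⟩)
    · have hA's := (hiff' s u).mp (Or.inl h)
      obtain ⟨hsq, hup⟩ := hcond u hA's.1
      exact hA's.2.2 ⟨hsq, hup⟩
    · exact hsp h

private lemma sgo_lemA : ∀ (n : ℕ) (A : V → V → Prop),
    {p : V × V | A p.1 p.2}.ncard ≤ n →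
    (∀ u v, A u v → A v u) → (∀ v, ¬ A v v) → (∀ v, {u | A v u}.ncard ≤ 2) →
    ∀ s, {u | A s u}.ncard ≤ 1 →
    ∃ r : V → V → Prop,
      (∀ u v, (r u v ∨ r v u) ↔ A u v) ∧ (∀ u v, ¬ (r u v ∧ r v u)) ∧
      (∀ v, {u | r v u}.ncard ≤ 1) ∧ (∀ u, ¬ r s u) := by
  intro n
  induction n with
  | zero =>
    intro A hm hsym hirr hdeg s hs
    have hno : ∀ u v, ¬ A u v := by
      intro u v h
      have h1 : 0 < {p : V × V | A p.1 p.2}.ncard :=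
        (Set.ncard_pos (Set.toFinite _)).mpr ⟨(u, v), h⟩
      omega
    obtain ⟨r, h1, h2, h3, h4⟩ := sgo_no_edge A hno
    exact ⟨r, h1, h2, h3, h4 s⟩
  | succ n ih =>
    intro A hm hsym hirr hdeg s hs
    by_cases hE : ∃ u v, A u v
    · by_cases hsx : ∃ x, A s x
      · obtain ⟨x, hx⟩ := hsx
        have hxs : x ≠ s := fun h => hirr s (h ▸ hx)
        obtain ⟨r, h1, h2, h3, h4⟩ := sgo_step n ih A hm hsym hirr hdeg x s (hsym s x hx)
        refine ⟨r, h1, h2, h3, h4 s (Ne.symm hxs) ?_⟩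
        intro u hu
        refine ⟨rfl, ?_⟩
        by_contra hne
        have : 1 < {u | A s u}.ncard :=
          (Set.one_lt_ncard (Set.toFinite _)).mpr ⟨u, hu, x, hx, hne⟩
        omega
      · obtain ⟨u₀, v₀, h₀⟩ := hE
        have hs0 : u₀ ≠ s := fun h => hsx ⟨v₀, h ▸ h₀⟩
        obtain ⟨r, h1, h2, h3, h4⟩ := sgo_step n ih A hm hsym hirr hdeg u₀ v₀ h₀
        exact ⟨r, h1, h2, h3, h4 s (Ne.symm hs0) (fun u hu => absurd ⟨u, hu⟩ hsx)⟩
    · push_neg at hE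
      obtain ⟨r, h1, h2, h3, h4⟩ := sgo_no_edge A hE
      exact ⟨r, h1, h2, h3, h4 s⟩

private lemma sgo_lemA' (A : V → V → Prop)
    (hsym : ∀ u v, A u v → A v u) (hirr : ∀ v, ¬ A v v)
    (hdeg : ∀ v, {u | A v u}.ncard ≤ 2) :
    ∃ r : V → V → Prop,
      (∀ u v, (r u v ∨ r v u) ↔ A u v) ∧ (∀ u v, ¬ (r u v ∧ r v u)) ∧
      (∀ v, {u | r v u}.ncard ≤ 1) := by
  by_cases hE : ∃ u v, A u v
  · obtain ⟨u₀, v₀, h₀⟩ := hE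
    obtain ⟨r, h1, h2, h3, _⟩ :=
      sgo_step ({p : V × V | A p.1 p.2}.ncard) (fun B hB => sgo_lemA _ B hB) A
        (Nat.le_succ _) hsym hirr hdeg u₀ v₀ h₀
    exact ⟨r, h1, h2, h3⟩
  · push_neg at hE
    obtain ⟨r, h1, h2, h3, _⟩ := sgo_no_edge A hE
    exact ⟨r, h1, h2, h3⟩

end Aux

section Aux2
variable {V : Type} [Fintype V] [DecidableEq V]

private lemma sgo_glue (A : V → V → Prop)
    (hsym : ∀ u v, A u v → A v u)
    (a b : V)
    (A' : V → V → Prop)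
    (hA'iff : ∀ u v, A' u v ↔ A u v ∧ u ≠ a ∧ u ≠ b ∧ v ≠ a ∧ v ≠ b)
    (f' : V → V)
    (hS1' : ∀ v, f' v ≠ v → A' v (f' v))
    (hS2' : ∀ v, f' (f' v) = f' v)
    (hS3' : ∀ v, (∃ u, A' v u) → f' v ≠ v ∨ ∃ u, u ≠ v ∧ f' u = v)
    (P : V → Prop)
    (hP : ∀ v, P v ↔ v = a ∨ v = b ∨ (v ≠ a ∧ v ≠ b ∧ (∃ u, A v u) ∧ ∀ u, ¬ A' v u))
    (t : V → V)
    (ht1 : ∀ v, P v → t v ≠ v → A v (t v))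
    (ht2 : ∀ v, P v → P (t v) ∧ t (t v) = t v)
    (ht3 : ∀ v, P v → (∃ u, A v u) → t v ≠ v ∨ ∃ u, u ≠ v ∧ P u ∧ t u = v) :
    ∃ f : V → V,
      (∀ v, f v ≠ v → A v (f v)) ∧
      (∀ v, f (f v) = f v) ∧
      (∀ v, (∃ u, A v u) → f v ≠ v ∨ ∃ u, u ≠ v ∧ f u = v) := by
  classical
  refine ⟨fun v => if P v then t v else f' v, ?_, ?_, ?_⟩
  · intro v
    by_cases hv : P v
    · simp only [if_pos hv]
      exact ht1 v hv
    · simp only [if_neg hv]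
      intro h
      exact ((hA'iff v (f' v)).mp (hS1' v h)).1
  · intro v
    by_cases hv : P v
    · simp only [if_pos hv]
      obtain ⟨h1, h2⟩ := ht2 v hv
      simp only [if_pos h1]
      exact h2
    · simp only [if_neg hv]
      by_cases hw : f' v = v
      · rw [hw]
        simp only [if_neg hv]
        exact hw
      · obtain ⟨hAvw, hva, hvb, hwa, hwb⟩ := (hA'iff v (f' v)).mp (hS1' v hw)
        have hnPw : ¬ P (f' v) := by
          intro hPw
          rcases (hP (f' v)).mp hPw with h | h | ⟨_, _, _, hiso⟩
          · exact hwa h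
          · exact hwb h
          · exact hiso v ((hA'iff (f' v) v).mpr ⟨hsym v (f' v) hAvw, hwa, hwb, hva, hvb⟩)
        simp only [if_neg hnPw]
        exact hS2' v
  · intro v hE
    by_cases hv : P v
    · rcases ht3 v hv hE with h | ⟨u, hu1, hu2, hu3⟩
      · left; simp only [if_pos hv]; exact h
      · right; exact ⟨u, hu1, by simp only [if_pos hu2]; exact hu3⟩
    · have hva : v ≠ a := fun h => hv ((hP v).mpr (Or.inl h))
      have hvb : v ≠ b := fun h => hv ((hP v).mpr (Or.inr (Or.inl h)))
      have hex' : ∃ u, A' v u := by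
        by_contra hno
        push_neg at hno
        exact hv ((hP v).mpr (Or.inr (Or.inr ⟨hva, hvb, hE, fun u h => hno u h⟩)))
      rcases hS3' v hex' with h | ⟨u, hu1, hu2⟩
      · left; simp only [if_neg hv]; exact h
      · right
        refine ⟨u, hu1, ?_⟩
        have hfu : f' u ≠ u := by rw [hu2]; exact fun h => hu1 h.symm
        obtain ⟨hAuv, hua, hub, _, _⟩ := (hA'iff u (f' u)).mp (hS1' u hfu)
        have hnPu : ¬ P u := by
          intro hPu
          rcases (hP u).mp hPu with h | h | ⟨_, _, _, hiso⟩
          · exact hua h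
          · exact hub h
          · exact hiso (f' u) (hS1' u hfu)
        simp only [if_neg hnPu]
        exact hu2

private lemma sgo_lemB : ∀ (n : ℕ) (A : V → V → Prop),
    {p : V × V | A p.1 p.2}.ncard ≤ n →
    (∀ u v, A u v → A v u) → (∀ v, ¬ A v v) →
    ∃ f : V → V,
      (∀ v, f v ≠ v → A v (f v)) ∧
      (∀ v, f (f v) = f v) ∧
      (∀ v, (∃ u, A v u) → f v ≠ v ∨ ∃ u, u ≠ v ∧ f u = v) := by
  intro n
  induction n with
  | zero =>
    intro A hm hsym hirr
    have hno : ∀ u v, ¬ A u v := by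
      intro u v h
      have h1 : 0 < {p : V × V | A p.1 p.2}.ncard :=
        (Set.ncard_pos (Set.toFinite _)).mpr ⟨(u, v), h⟩
      omega
    exact ⟨id, fun v h => absurd rfl h, fun v => rfl,
      fun v ⟨u, hu⟩ => absurd hu (hno v u)⟩
  | succ n ih =>
    intro A hm hsym hirr
    by_cases hE : ∃ u v, A u v
    · obtain ⟨a, b, hab⟩ := hE
      have hne : a ≠ b := fun h => hirr b (h ▸ hab)
      classical
      set A' : V → V → Prop :=
        fun u v => A u v ∧ u ≠ a ∧ u ≠ b ∧ v ≠ a ∧ v ≠ b with hA'def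
      have hA'iff : ∀ u v, A' u v ↔ A u v ∧ u ≠ a ∧ u ≠ b ∧ v ≠ a ∧ v ≠ b :=
        fun u v => Iff.rfl
      have hsym' : ∀ u v, A' u v → A' v u := by
        rintro u v ⟨h1, h2, h3, h4, h5⟩
        exact ⟨hsym u v h1, h4, h5, h2, h3⟩
      have hirr' : ∀ v, ¬ A' v v := fun v h => hirr v h.1
      have hm' : {p : V × V | A' p.1 p.2}.ncard ≤ n := by
        have hss : {p' : V × V | A' p'.1 p'.2} ⊂ {p' : V × V | A p'.1 p'.2} := by
          constructor
          · intro x hx; exact hx.1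
          · intro hsub
            have h1 : ((a, b) : V × V) ∈ {p' : V × V | A p'.1 p'.2} := hab
            exact (hsub h1).2.1 rfl
        have := Set.ncard_lt_ncard hss (Set.toFinite _)
        omega
      obtain ⟨f', hS1', hS2', hS3'⟩ := ih A' hm' hsym' hirr'
      set P : V → Prop :=
        fun v => v = a ∨ v = b ∨ (v ≠ a ∧ v ≠ b ∧ (∃ u, A v u) ∧ ∀ u, ¬ A' v u)
        with hPdef
      have hP : ∀ v, P v ↔ v = a ∨ v = b ∨ (v ≠ a ∧ v ≠ b ∧ (∃ u, A v u) ∧ ∀ u, ¬ A' v u) :=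
        fun v => Iff.rfl
      -- every "Y" vertex has all its neighbours in {a, b}
      have hYab : ∀ y, y ≠ a → y ≠ b → (∀ u, ¬ A' y u) → ∀ u, A y u → u = a ∨ u = b := by
        intro y hya hyb hiso u hu
        by_contra hc
        push_neg at hc
        exact hiso u ⟨hu, hya, hyb, hc.1, hc.2⟩
      have hYb : ∀ y, y ≠ a → y ≠ b → (∃ u, A y u) → (∀ u, ¬ A' y u) → ¬ A y a → A y b := by
        intro y hya hyb ⟨u, hu⟩ hiso hnya
        rcases hYab y hya hyb hiso u hu with h | h
        · exact absurd (h ▸ hu) hnya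
        · exact h ▸ hu
      by_cases hbr : ∃ y, (y ≠ a ∧ y ≠ b ∧ (∃ u, A y u) ∧ ∀ u, ¬ A' y u) ∧ ¬ A y a
      · obtain ⟨y₀, hy₀, hy₀a⟩ := hbr
        have hy₀b : A y₀ b := hYb y₀ hy₀.1 hy₀.2.1 hy₀.2.2.1 hy₀.2.2.2 hy₀a
        by_cases haA : ∃ y, (y ≠ a ∧ y ≠ b ∧ (∃ u, A y u) ∧ ∀ u, ¬ A' y u) ∧ A y a
        · -- branch 1a : a and b both centers
          obtain ⟨y₁, hy₁, hy₁a⟩ := haA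
          refine sgo_glue A hsym a b A' hA'iff f' hS1' hS2' hS3' P hP
            (fun v => if v = a then a else if v = b then b else if A v a then a else b)
            ?_ ?_ ?_
          · intro v hv htv
            rcases hv with h | h | hY
            · subst h; simp only [if_pos rfl] at htv; exact absurd rfl htv
            · subst h
              simp only [if_neg (Ne.symm hne), if_pos rfl] at htv
              exact absurd rfl htv
            · simp only [if_neg hY.1, if_neg hY.2.1] at htv ⊢
              by_cases hva : A v a
              · simp only [if_pos hva]; exact hva
              · simp only [if_neg hva]
                exact hYb v hY.1 hY.2.1 hY.2.2.1 hY.2.2.2 hva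
          · intro v hv
            have hor : (if v = a then a else if v = b then b else if A v a then a else b) = a ∨
                (if v = a then a else if v = b then b else if A v a then a else b) = b := by
              split_ifs <;> simp
            rcases hor with h | h
            · simp only [h]
              exact ⟨Or.inl rfl, by simp⟩
            · simp only [h]
              exact ⟨Or.inr (Or.inl rfl), by simp [Ne.symm hne]⟩
          · intro v hv _
            rcases hv with h | h | hY
            · subst h
              right
              refine ⟨y₁, hy₁.1, Or.inr (Or.inr hy₁), ?_⟩
              simp only [if_neg hy₁.1, if_neg hy₁.2.1, if_pos hy₁a]
            · subst h
              right
              refine ⟨y₀, hy₀.2.1, Or.inr (Or.inr hy₀), ?_⟩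
              simp only [if_neg hy₀.1, if_neg hy₀.2.1, if_neg hy₀a]
            · left
              simp only [if_neg hY.1, if_neg hY.2.1]
              split_ifs
              · exact Ne.symm hY.1
              · exact Ne.symm hY.2.1
        · -- branch 1b : b is the unique center
          refine sgo_glue A hsym a b A' hA'iff f' hS1' hS2' hS3' P hP (fun _ => b) ?_ ?_ ?_
          · intro v hv htv
            rcases hv with h | h | hY
            · subst h; exact hab
            · exact absurd h.symm htv
            · refine hYb v hY.1 hY.2.1 hY.2.2.1 hY.2.2.2 ?_
              intro hva
              exact haA ⟨v, hY, hva⟩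
          · intro v hv
            exact ⟨Or.inr (Or.inl rfl), rfl⟩
          · intro v hv _
            rcases hv with h | h | hY
            · subst h; exact Or.inl hne.symm
            · subst h
              right
              exact ⟨y₀, hy₀.2.1, Or.inr (Or.inr hy₀), rfl⟩
            · exact Or.inl (Ne.symm hY.2.1)
      · -- branch 2 : a is the unique center
        push_neg at hbr
        refine sgo_glue A hsym a b A' hA'iff f' hS1' hS2' hS3' P hP (fun _ => a) ?_ ?_ ?_
        · intro v hv htv
          rcases hv with h | h | hY
          · exact absurd h.symm htv
          · rw [h]; exact hsym a b hab
          · exact hbr v hY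
        · intro v hv
          exact ⟨Or.inl rfl, rfl⟩
        · intro v hv _
          rcases hv with h | h | hY
          · subst h
            right
            exact ⟨b, hne.symm, Or.inr (Or.inl rfl), rfl⟩
          · subst h; exact Or.inl hne
          · exact Or.inl (Ne.symm hY.1)
    · push_neg at hE
      exact ⟨id, fun v h => absurd rfl h, fun v => rfl,
        fun v ⟨u, hu⟩ => absurd hu (hE v u)⟩

end Aux2

/-- Every finite subcubic simple graph admits an orientation with maximum outdegree at
most `2` in which every vertex of outdegree exactly `2` has an out-neighbour of
outdegree at most `1`. -/
theorem subcubic_good_orientation {V : Type} [Fintype V] [DecidableEq V]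
    (G : SimpleGraph V) [DecidableRel G.Adj] (hdeg : ∀ v, G.degree v ≤ 3) :
    ∃ r : V → V → Prop,
      (∀ v, ¬ r v v) ∧
      (∀ u v, (r u v ∨ r v u) ↔ G.Adj u v) ∧
      (∀ u v, ¬ (r u v ∧ r v u)) ∧
      (∀ v, {u | r v u}.ncard ≤ 2) ∧
      (∀ u, {x | r u x}.ncard = 2 → ∃ w, r u w ∧ {x | r w x}.ncard ≤ 1) := by
  classical
  have hsym : ∀ u v, G.Adj u v → G.Adj v u := fun u v h => h.symm
  have hirr : ∀ v, ¬ G.Adj v v := fun v h => G.loopless.irrefl v h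
  have hdeg3 : ∀ v, {u | G.Adj v u}.ncard ≤ 3 := by
    intro v
    have h1 : {u | G.Adj v u} = ↑(G.neighborFinset v) := by
      ext u; simp [SimpleGraph.mem_neighborFinset]
    rw [h1, Set.ncard_coe_finset]
    exact hdeg v
  obtain ⟨f, hS1, hS2, hS3⟩ := sgo_lemB ({p : V × V | G.Adj p.1 p.2}.ncard)
    (fun u v => G.Adj u v) le_rfl hsym hirr
  set H : V → V → Prop := fun x y => G.Adj x y ∧ f x ≠ y ∧ f y ≠ x with hHdef
  have hsymH : ∀ u v, H u v → H v u := by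
    rintro u v ⟨h1, h2, h3⟩; exact ⟨h1.symm, h3, h2⟩
  have hirrH : ∀ v, ¬ H v v := fun v h => hirr v h.1
  have hdegH : ∀ v, {u | H v u}.ncard ≤ 2 := by
    intro v
    by_cases h2 : {u | G.Adj v u}.ncard ≤ 2
    · exact le_trans (Set.ncard_le_ncard (fun u h => h.1) (Set.toFinite _)) h2
    · have hne : ∃ u, G.Adj v u := by
        by_contra h
        push_neg at h
        have hemp : {u | G.Adj v u} = ∅ := Set.eq_empty_iff_forall_notMem.mpr h
        rw [hemp] at h2
        simp at h2
      rcases hS3 v hne with hfv | ⟨u, huv, hfu⟩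
      · have hmem : f v ∈ {u | G.Adj v u} := hS1 v hfv
        have hsub : {u | H v u} ⊆ {u | G.Adj v u} \ {f v} := by
          rintro u ⟨h1, h2', h3⟩
          exact ⟨h1, fun hc => h2' (Set.mem_singleton_iff.mp hc).symm⟩
        have hle := Set.ncard_le_ncard hsub (Set.toFinite _)
        rw [Set.ncard_diff_singleton_of_mem hmem] at hle
        have h3 := hdeg3 v
        omega
      · have hfune : f u ≠ u := by rw [hfu]; exact fun h => huv h.symm
        have hadj : G.Adj v u := by
          have h4 := hS1 u hfune
          rw [hfu] at h4
          exact hsym u v h4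
        have hmem : u ∈ {x | G.Adj v x} := hadj
        have hsub : {x | H v x} ⊆ {x | G.Adj v x} \ {u} := by
          rintro x ⟨h1, _, h3⟩
          refine ⟨h1, fun hc => h3 ?_⟩
          rw [Set.mem_singleton_iff.mp hc, hfu]
        have hle := Set.ncard_le_ncard hsub (Set.toFinite _)
        rw [Set.ncard_diff_singleton_of_mem hmem] at hle
        have h3 := hdeg3 v
        omega
  obtain ⟨rH, hiffH, hnbH, hodH⟩ := sgo_lemA' H hsymH hirrH hdegH
  refine ⟨fun u w => rH u w ∨ (f u = w ∧ w ≠ u), ?_, ?_, ?_, ?_, ?_⟩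
  · rintro v (h | ⟨_, h⟩)
    · exact hirrH v ((hiffH v v).mp (Or.inl h))
    · exact h rfl
  · intro u v
    constructor
    · rintro ((h | ⟨h1, h2⟩) | (h | ⟨h1, h2⟩))
      · exact ((hiffH u v).mp (Or.inl h)).1
      · have h4 := hS1 u (by rw [h1]; exact h2)
        rw [h1] at h4
        exact h4
      · exact (((hiffH v u).mp (Or.inl h)).1).symm
      · have h4 := hS1 v (by rw [h1]; exact h2)
        rw [h1] at h4
        exact hsym v u h4
    · intro hA
      by_cases h1 : f u = v
      · exact Or.inl (Or.inr ⟨h1, hA.ne'⟩)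
      · by_cases h2 : f v = u
        · exact Or.inr (Or.inr ⟨h2, hA.ne⟩)
        · rcases (hiffH u v).mpr ⟨hA, h1, h2⟩ with h | h
          · exact Or.inl (Or.inl h)
          · exact Or.inr (Or.inl h)
  · rintro u v ⟨h1 | h1, h2 | h2⟩
    · exact hnbH u v ⟨h1, h2⟩
    · exact ((hiffH u v).mp (Or.inl h1)).2.2 h2.1
    · exact ((hiffH v u).mp (Or.inl h2)).2.2 h1.1
    · have h5 := hS2 u
      rw [h1.1, h2.1] at h5
      exact h1.2 h5.symm
  · intro v
    have hsub : {u | rH v u ∨ (f v = u ∧ u ≠ v)} ⊆ {u | rH v u} ∪ {f v} := by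
      rintro u (h | ⟨h, _⟩)
      · exact Or.inl h
      · exact Or.inr h.symm
    have h1 := hodH v
    have h2 : ({f v} : Set V).ncard = 1 := Set.ncard_singleton _
    have h3 := Set.ncard_union_le {u | rH v u} ({f v} : Set V)
    have h4 := Set.ncard_le_ncard hsub (Set.toFinite _)
    show {u | rH v u ∨ (f v = u ∧ u ≠ v)}.ncard ≤ 2
    omega
  · intro u h2
    have h2' : {x | rH u x ∨ (f u = x ∧ x ≠ u)}.ncard = 2 := h2
    have hfu : f u ≠ u := by
      intro hf
      have hsub : {x | rH u x ∨ (f u = x ∧ x ≠ u)} ⊆ {x | rH u x} := by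
        rintro x (h | ⟨h1, h3⟩)
        · exact h
        · rw [hf] at h1
          exact absurd h1 (Ne.symm h3)
      have h5 := le_trans (Set.ncard_le_ncard hsub (Set.toFinite _)) (hodH u)
      omega
    refine ⟨f u, Or.inr ⟨rfl, hfu⟩, ?_⟩
    have hsub : {x | rH (f u) x ∨ (f (f u) = x ∧ x ≠ f u)} ⊆ {x | rH (f u) x} := by
      rintro x (h | ⟨h1, hx⟩)
      · exact h
      · rw [hS2 u] at h1
        exact absurd h1.symm hx
    exact le_trans (Set.ncard_le_ncard hsub (Set.toFinite _)) (hodH (f u))
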